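/- Let A, A_z be real symmetric positive definite 3×3 matrices, S a real 3×3 matrix such that I + (A_z − A)·S·A⁻¹ is invertible, and set Q_z := (β_z + 2I)⁻¹β_z with β_z := A^{-1/2}(A_z − A)A^{-1/2}. Then the matrix identity (I + (A_z − A)·S·A⁻¹)⁻¹·(A_z − A) = 2·A^{1/2}·(I − Q_z + 2Q_z·A^{1/2}·S·A^{-1/2})⁻¹·Q_z·A^{1/2} holds (whenever the right-hand side inverse exists). -/

import Mathlib

open Matrix

open Matrix

/-- The square root of a positive semidefinite matrix, as defined in the older Mathlib. -/
noncomputable def Matrix.PosSemidef.sqrt {n 𝕜 : Type*} [Fintype n] [DecidableEq n] [RCLike 𝕜]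
    [PartialOrder 𝕜] [StarOrderedRing 𝕜]
    {A : Matrix n n 𝕜} (hA : A.PosSemidef) : Matrix n n 𝕜 :=
  hA.1.eigenvectorUnitary.1 * diagonal (fun i => ((Real.sqrt (hA.1.eigenvalues i) : ℝ) : 𝕜)) *
    (star hA.1.eigenvectorUnitary : Matrix n n 𝕜)

theorem Matrix.PosSemidef.sqrt_mul_self' {n : Type*} [Fintype n] [DecidableEq n]
    {A : Matrix n n ℝ} (hA : A.PosSemidef) : hA.sqrt * hA.sqrt = A := by
  unfold Matrix.PosSemidef.sqrt
  have hU : (star hA.1.eigenvectorUnitary : Matrix n n ℝ) * hA.1.eigenvectorUnitary.1 = 1 :=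
    Matrix.UnitaryGroup.star_mul_self _
  have hd : diagonal (fun i => ((Real.sqrt (hA.1.eigenvalues i) : ℝ) : ℝ)) *
      diagonal (fun i => ((Real.sqrt (hA.1.eigenvalues i) : ℝ) : ℝ))
      = diagonal (RCLike.ofReal ∘ hA.1.eigenvalues) := by
    rw [diagonal_mul_diagonal]
    congr 1; funext i
    simp [Real.mul_self_sqrt (hA.eigenvalues_nonneg i)]
  conv_rhs => rw [hA.1.spectral_theorem, Unitary.conjStarAlgAut_apply]
  rw [← hd]
  calc _ = hA.1.eigenvectorUnitary.1 * diagonal (fun i => ((Real.sqrt (hA.1.eigenvalues i) : ℝ) : ℝ)) *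
      ((star hA.1.eigenvectorUnitary : Matrix n n ℝ) * hA.1.eigenvectorUnitary.1) *
      diagonal (fun i => ((Real.sqrt (hA.1.eigenvalues i) : ℝ) : ℝ)) *
      (star hA.1.eigenvectorUnitary : Matrix n n ℝ) := by simp only [Matrix.mul_assoc]; rfl
    _ = _ := by rw [hU, Matrix.mul_one]; simp only [Matrix.mul_assoc]

/-- For real symmetric positive definite `3×3` matrices `A, A_z`, Eshelby-like tensor `S` with
`I + (A_z − A)·S·A⁻¹` invertible, `β_z := A^{-1/2}(A_z − A)A^{-1/2}`, `Q_z := (β_z+2I)⁻¹β_z`: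
`(I + (A_z − A)·S·A⁻¹)⁻¹·(A_z − A)
  = 2·A^{1/2}·(I − Q_z + 2Q_z·A^{1/2}·S·A^{-1/2})⁻¹·Q_z·A^{1/2}`,
whenever the right-hand side inverse exists. -/
theorem polarization_tensor_two_forms
    (A Az S : Matrix (Fin 3) (Fin 3) ℝ)
    (hA : A.PosDef) (hAz : Az.PosDef) (hAs : A.IsSymm) (hAzs : Az.IsSymm)
    (βz Qz : Matrix (Fin 3) (Fin 3) ℝ)
    (hβz : βz = (hA.posSemidef.sqrt)⁻¹ * (Az - A) * (hA.posSemidef.sqrt)⁻¹)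
    (hQz : Qz = (βz + 2)⁻¹ * βz)
    (hu1 : IsUnit (1 + (Az - A) * S * A⁻¹))
    (hu2 : IsUnit (1 - Qz + (2 : ℝ) • (Qz * hA.posSemidef.sqrt * S * (hA.posSemidef.sqrt)⁻¹))) :
    (1 + (Az - A) * S * A⁻¹)⁻¹ * (Az - A)
      = (2 : ℝ) • (hA.posSemidef.sqrt *
          (1 - Qz + (2 : ℝ) • (Qz * hA.posSemidef.sqrt * S * (hA.posSemidef.sqrt)⁻¹))⁻¹ *
          Qz * hA.posSemidef.sqrt) := by
  set R := hA.posSemidef.sqrt with hRdef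
  have hRR : R * R = A := hA.posSemidef.sqrt_mul_self'
  set D := Az - A with hD
  -- units
  have hAu : IsUnit A := hA.isUnit
  have hAd : IsUnit A.det := hA.det_pos.ne'.isUnit
  have hRd : IsUnit R.det := by
    have h2 : IsUnit (R.det * R.det) := by rw [← det_mul, hRR]; exact hAd
    exact isUnit_of_mul_isUnit_left h2
  have hSumpd : (Az + A).PosDef := hAz.add hA
  have hSumd : IsUnit (Az + A).det := hSumpd.det_pos.ne'.isUnit
  -- collapse lemmas
  have eR1 : R * R⁻¹ = 1 := mul_nonsing_inv R hRd
  have eR2 : R⁻¹ * R = 1 := nonsing_inv_mul R hRd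
  have eA1 : A * A⁻¹ = 1 := mul_nonsing_inv A hAd
  have eA2 : A⁻¹ * A = 1 := nonsing_inv_mul A hAd
  have eS1 : (Az + A) * (Az + A)⁻¹ = 1 := mul_nonsing_inv _ hSumd
  have eS2 : (Az + A)⁻¹ * (Az + A) = 1 := nonsing_inv_mul _ hSumd
  have eRinvA : R⁻¹ * A * R⁻¹ = 1 := by
    rw [← hRR, show R⁻¹ * (R * R) * R⁻¹ = (R⁻¹ * R) * (R * R⁻¹) from by noncomm_ring,
      eR1, eR2, one_mul]
  -- βz + 2
  have hβ2 : βz + 2 = R⁻¹ * (Az + A) * R⁻¹ := by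
    have hAA : Az + A = D + (A + A) := by rw [hD]; abel
    have h2' : R⁻¹ * (A + A) * R⁻¹ = 2 := by
      rw [mul_add, add_mul, eRinvA]; norm_num
    rw [hβz, hAA, mul_add, add_mul, h2']
  have hβinv : (βz + 2)⁻¹ = R * (Az + A)⁻¹ * R := by
    rw [hβ2, Matrix.mul_inv_rev, Matrix.mul_inv_rev, nonsing_inv_nonsing_inv R hRd]
    noncomm_ring
  -- Qz formula
  have hQ : Qz = R * (Az + A)⁻¹ * D * R⁻¹ := by
    rw [hQz, hβinv, hβz,
      show R * (Az + A)⁻¹ * R * (R⁻¹ * D * R⁻¹)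
        = R * (Az + A)⁻¹ * (R * R⁻¹) * (D * R⁻¹) from by noncomm_ring,
      eR1, mul_one]
    noncomm_ring
  have hQR : Qz * R = R * (Az + A)⁻¹ * D := by
    rw [hQ, mul_assoc, eR2, mul_one]
  -- Y formula
  have h1 : (1 : Matrix (Fin 3) (Fin 3) ℝ) = R * (Az + A)⁻¹ * (Az + A) * R⁻¹ := by
    rw [mul_assoc R, eS2, mul_one, eR1]
  have hsplit : Az + A - D + (2:ℝ) • (D * S) = (2:ℝ) • (A + D * S) := by
    rw [hD, smul_add, two_smul ℝ A, two_smul ℝ (D * S), hD]; abel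
  have hY : 1 - Qz + (2 : ℝ) • (Qz * R * S * R⁻¹)
      = R * (Az + A)⁻¹ * ((2:ℝ) • (A + D * S)) * R⁻¹ := by
    rw [hQ]
    rw [show R * (Az + A)⁻¹ * D * R⁻¹ * R = R * (Az + A)⁻¹ * D * (R⁻¹ * R) from by
      noncomm_ring, eR2, mul_one]
    rw [h1, ← hsplit]
    simp only [two_smul]
    noncomm_ring
  -- A + D*S is a unit
  have hADSu : IsUnit (A + D * S).det := by
    have hXAu : IsUnit (A + D * S) := by
      have hx : A + D * S = (1 + D * S * A⁻¹) * A := by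
        rw [add_mul, one_mul, mul_assoc, eA2, mul_one]
      rw [hx]; exact hu1.mul hAu
    exact (isUnit_iff_isUnit_det _).1 hXAu
  have hsmulinv : ((2:ℝ) • (A + D * S))⁻¹ = (2:ℝ)⁻¹ • (A + D * S)⁻¹ := by
    have := Matrix.inv_smul (2:ℝ) (A := A + D * S) hADSu
    simpa using this
  have hYinv : (1 - Qz + (2 : ℝ) • (Qz * R * S * R⁻¹))⁻¹
      = R * ((2:ℝ)⁻¹ • (A + D * S)⁻¹) * (Az + A) * R⁻¹ := by
    rw [hY, Matrix.mul_inv_rev, Matrix.mul_inv_rev, Matrix.mul_inv_rev,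
      nonsing_inv_nonsing_inv R hRd, nonsing_inv_nonsing_inv _ hSumd, hsmulinv]
    simp only [mul_assoc]
  -- X inverse
  have hXinv : (1 + D * S * A⁻¹)⁻¹ = A * (A + D * S)⁻¹ := by
    have hX : 1 + D * S * A⁻¹ = (A + D * S) * A⁻¹ := by
      rw [add_mul, eA1]
    rw [hX, Matrix.mul_inv_rev, nonsing_inv_nonsing_inv A hAd]
  -- final computation
  rw [hXinv, hYinv, hQ]
  have e1 : ∀ M : Matrix (Fin 3) (Fin 3) ℝ, R⁻¹ * (R * M) = M := fun M => by
    rw [← mul_assoc, eR2, one_mul]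
  have e2 : ∀ M : Matrix (Fin 3) (Fin 3) ℝ, R * (R⁻¹ * M) = M := fun M => by
    rw [← mul_assoc, eR1, one_mul]
  have e3 : ∀ M : Matrix (Fin 3) (Fin 3) ℝ, (Az + A)⁻¹ * ((Az + A) * M) = M := fun M => by
    rw [← mul_assoc, eS2, one_mul]
  have e4 : ∀ M : Matrix (Fin 3) (Fin 3) ℝ, (Az + A) * ((Az + A)⁻¹ * M) = M := fun M => by
    rw [← mul_assoc, eS1, one_mul]
  have e5 : ∀ M : Matrix (Fin 3) (Fin 3) ℝ, R * (R * M) = A * M := fun M => by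
    rw [← mul_assoc, hRR]
  simp only [mul_assoc, smul_mul_assoc, mul_smul_comm, smul_smul, e1, e2, e3, e4, e5,
    eR1, eR2, eS1, eS2, mul_one, one_mul]
  norm_num
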